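/- For any fixed multicast power P_mu ∈ [0,P), the optimal value of P2, i.e., the supremum of Σ_m α_m SE_m over all feasible points, equals (1 − (U+G)/T)·Σ_{m=1}^U α_m log₂(1 + N p_m^{dl*} θ_m* / (1 + β_m P)), where θ_m* = E_m β_m²/(1 + E_m β_m), p_m^{dl*} = max{0, α_m/(ν ln 2) − (1 + β_m P)/(N θ_m*)}, and ν > 0 is chosen so that Σ_{m=1}^U p_m^{dl*} = P − P_mu; this value is attained at τ* = U+G, p_m^{up*} = E_m/(U+G), and downlink powers {p_m^{dl*}}. -/

import Mathlib

open Finset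

noncomputable section

/-- Effective estimation quality `θ_m = τ p_m^{up} β_m² / (1 + τ p_m^{up} β_m)`. -/
def thetaUn {U : ℕ} (β : Fin U → ℝ) (τ : ℕ) (pup : Fin U → ℝ) (m : Fin U) : ℝ :=
  (τ : ℝ) * pup m * (β m) ^ 2 / (1 + (τ : ℝ) * pup m * β m)

/-- `SINR_m = N p_m^{dl} θ_m / (1 + β_m (P_mu + Σ_u p_u^{dl}))`. -/
def sinrUn {U : ℕ} (N : ℕ) (Pmu : ℝ) (β : Fin U → ℝ) (τ : ℕ)
    (pup pdl : Fin U → ℝ) (m : Fin U) : ℝ :=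
  (N : ℝ) * pdl m * thetaUn β τ pup m / (1 + β m * (Pmu + ∑ u, pdl u))

/-- `SE_m = (1 - τ/T) log₂(1 + SINR_m)`. -/
def seUn {U : ℕ} (N T : ℕ) (Pmu : ℝ) (β : Fin U → ℝ) (τ : ℕ)
    (pup pdl : Fin U → ℝ) (m : Fin U) : ℝ :=
  (1 - (τ : ℝ) / (T : ℝ)) * Real.logb 2 (1 + sinrUn N Pmu β τ pup pdl m)

/-- The weighted sum spectral efficiency objective `Σ_m α_m SE_m` of problem P2. -/
def objUn {U : ℕ} (N T : ℕ) (Pmu : ℝ) (β α : Fin U → ℝ) (τ : ℕ)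
    (pup pdl : Fin U → ℝ) : ℝ :=
  ∑ m, α m * seUn N T Pmu β τ pup pdl m

/-- Feasibility for problem P2 with fixed multicast power `Pmu`. -/
def feasUn {U : ℕ} (G T : ℕ) (P Pmu : ℝ) (E : Fin U → ℝ) (τ : ℕ)
    (pup pdl : Fin U → ℝ) : Prop :=
  U + G ≤ τ ∧ τ ≤ T ∧
    (∀ m, 0 ≤ pup m ∧ (τ : ℝ) * pup m ≤ E m) ∧
    (∀ m, 0 ≤ pdl m) ∧ ∑ m, pdl m ≤ P - Pmu

/-- `θ_m* = E_m β_m² / (1 + E_m β_m)`: estimation quality with full pilot energy. -/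
def thetaStarUn {U : ℕ} (β E : Fin U → ℝ) (m : Fin U) : ℝ :=
  E m * (β m) ^ 2 / (1 + E m * β m)

/-- Water-filling downlink powers `p_m^{dl*} = max{0, α_m/(ν ln 2) - (1+β_m P)/(N θ_m*)}`. -/
def pdlStarUn {U : ℕ} (N : ℕ) (P : ℝ) (β E α : Fin U → ℝ) (ν : ℝ) (m : Fin U) : ℝ :=
  max 0 (α m / (ν * Real.log 2) - (1 + β m * P) / ((N : ℝ) * thetaStarUn β E m))

/-- Monotonicity of the estimation quality in the pilot energy. -/
lemma theta_mono_aux (b : ℝ) (hb : 0 < b) {s e : ℝ} (hs : 0 ≤ s) (hse : s ≤ e) :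
    s * b ^ 2 / (1 + s * b) ≤ e * b ^ 2 / (1 + e * b) := by
  have h1 : 0 < 1 + s * b := by positivity
  have h2 : 0 < 1 + e * b := by nlinarith
  rw [div_le_div_iff₀ h1 h2]
  nlinarith

/-- Water-filling key inequality (from concavity of log). -/
lemma waterfill_aux (a c ν x xs : ℝ) (ha : 0 < a) (hc : 0 < c) (hν : 0 < ν) (hx : 0 ≤ x)
    (hxs : xs = max 0 (a / (ν * Real.log 2) - 1 / c)) :
    a * Real.logb 2 (1 + c * x) ≤ a * Real.logb 2 (1 + c * xs) + ν * (x - xs) := by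
  have hl2 : 0 < Real.log 2 := Real.log_pos one_lt_two
  have hxs0 : 0 ≤ xs := by rw [hxs]; exact le_max_left _ _
  have h1 : 0 < 1 + c * x := by positivity
  have h2 : 0 < 1 + c * xs := by positivity
  have hlog : Real.log (1 + c * x) - Real.log (1 + c * xs) ≤ c * (x - xs) / (1 + c * xs) := by
    have h3 := Real.log_le_sub_one_of_pos (div_pos h1 h2)
    rw [Real.log_div h1.ne' h2.ne'] at h3
    have h4 : (1 + c * x) / (1 + c * xs) - 1 = c * (x - xs) / (1 + c * xs) := by
      field_simp
      ring
    linarith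
  have key : a * (Real.log (1 + c * x) - Real.log (1 + c * xs)) / Real.log 2 ≤ ν * (x - xs) := by
    by_cases h : a / (ν * Real.log 2) - 1 / c ≤ 0
    · have hxs' : xs = 0 := by rw [hxs, max_eq_left h]
      subst hxs'
      simp only [mul_zero, add_zero, Real.log_one, sub_zero] at hlog ⊢
      have hac : a * c ≤ ν * Real.log 2 := by
        rw [sub_nonpos, div_le_div_iff₀ (by positivity) hc] at h
        linarith
      rw [div_le_iff₀ hl2]
      have h5 : a * Real.log (1 + c * x) ≤ a * (c * x / 1) := by
        nlinarith [hlog]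
      rw [div_one] at h5
      nlinarith
    · push_neg at h
      have hxs' : xs = a / (ν * Real.log 2) - 1 / c := by rw [hxs, max_eq_right h.le]
      have h2xs : 1 + c * xs = c * a / (ν * Real.log 2) := by
        rw [hxs']
        field_simp
        ring
      have hstep : a * (Real.log (1 + c * x) - Real.log (1 + c * xs)) / Real.log 2
          ≤ a * (c * (x - xs) / (1 + c * xs)) / Real.log 2 := by
        gcongr
      refine hstep.trans ?_
      rw [h2xs]
      rw [div_le_iff₀ hl2]
      have hca : 0 < c * a / (ν * Real.log 2) := by positivity
      field_simp
      exact le_rfl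
  have heq : a * Real.logb 2 (1 + c * x) - a * Real.logb 2 (1 + c * xs)
      = a * (Real.log (1 + c * x) - Real.log (1 + c * xs)) / Real.log 2 := by
    simp only [Real.logb]
    ring
  linarith

set_option maxHeartbeats 1600000 in
/-- Theorem 2 of the paper: for any fixed multicast power
`P_mu ∈ [0,P)` and any water level `ν > 0` with `Σ_m p_m^{dl*} = P - P_mu`, the optimal
value of P2 equals `(1-(U+G)/T) Σ_m α_m log₂(1 + N p_m^{dl*} θ_m* / (1 + β_m P))`, and
this value is attained at `τ* = U+G`, `p_m^{up*} = E_m/(U+G)`, `{p_m^{dl*}}`. -/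
theorem sse_optimal_value
    (U G : ℕ) (hU : 1 ≤ U) (N : ℕ) (hN : 1 ≤ N) (T : ℕ) (hT : U + G ≤ T)
    (P : ℝ) (hP : 0 < P)
    (β E α : Fin U → ℝ)
    (hβ : ∀ m, 0 < β m) (hE : ∀ m, 0 < E m) (hα : ∀ m, 0 < α m)
    (Pmu : ℝ) (hPmu0 : 0 ≤ Pmu) (hPmuP : Pmu < P)
    (ν : ℝ) (hν : 0 < ν)
    (hbudget : ∑ m, pdlStarUn N P β E α ν m = P - Pmu) :
    sSup {v : ℝ | ∃ (τ : ℕ) (pup pdl : Fin U → ℝ),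
        feasUn G T P Pmu E τ pup pdl ∧ v = objUn N T Pmu β α τ pup pdl}
      = (1 - ((U + G : ℕ) : ℝ) / (T : ℝ)) *
          ∑ m, α m * Real.logb 2 (1 +
            (N : ℝ) * pdlStarUn N P β E α ν m * thetaStarUn β E m / (1 + β m * P)) ∧
    objUn N T Pmu β α (U + G) (fun m => E m / ((U + G : ℕ) : ℝ)) (pdlStarUn N P β E α ν)
      = (1 - ((U + G : ℕ) : ℝ) / (T : ℝ)) *
          ∑ m, α m * Real.logb 2 (1 +
            (N : ℝ) * pdlStarUn N P β E α ν m * thetaStarUn β E m / (1 + β m * P)) := by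
  have hUG : 0 < ((U + G : ℕ) : ℝ) := by
    have : 0 < U + G := by omega
    exact_mod_cast this
  have hT0 : (0 : ℝ) < T := by
    have : 0 < T := by omega
    exact_mod_cast this
  have hθ : ∀ m, 0 < thetaStarUn β E m := by
    intro m
    unfold thetaStarUn
    have h1 := hE m; have h2 := hβ m
    have : 0 < 1 + E m * β m := by positivity
    positivity
  have hden : ∀ m : Fin U, 0 < 1 + β m * P := fun m => by nlinarith [hβ m]
  have hN0 : (0 : ℝ) < N := by exact_mod_cast hN
  have hpdlstar0 : ∀ m, 0 ≤ pdlStarUn N P β E α ν m := fun m => le_max_left _ _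
  obtain ⟨c, hc_def⟩ : ∃ c : Fin U → ℝ,
      c = fun m => (N : ℝ) * thetaStarUn β E m / (1 + β m * P) := ⟨_, rfl⟩
  have hc : ∀ m, 0 < c m := fun m => by
    rw [hc_def]; exact div_pos (mul_pos hN0 (hθ m)) (hden m)
  have hcstar : ∀ m, pdlStarUn N P β E α ν m = max 0 (α m / (ν * Real.log 2) - 1 / c m) := by
    intro m
    unfold pdlStarUn
    rw [hc_def]
    rw [one_div_div]
  have hcmul : ∀ (m : Fin U) (x : ℝ),
      c m * x = (N : ℝ) * x * thetaStarUn β E m / (1 + β m * P) := by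
    intro m x
    rw [hc_def]
    ring
  -- the candidate point is feasible
  have hfeas : feasUn G T P Pmu E (U + G) (fun m => E m / ((U + G : ℕ) : ℝ))
      (pdlStarUn N P β E α ν) := by
    refine ⟨le_refl _, hT, fun m => ⟨div_nonneg (hE m).le hUG.le, ?_⟩, hpdlstar0,
      le_of_eq hbudget⟩
    rw [mul_div_cancel₀ _ hUG.ne']
  -- value attained at the candidate point
  have hattain : objUn N T Pmu β α (U + G) (fun m => E m / ((U + G : ℕ) : ℝ))
      (pdlStarUn N P β E α ν)
      = (1 - ((U + G : ℕ) : ℝ) / (T : ℝ)) *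
          ∑ m, α m * Real.logb 2 (1 +
            (N : ℝ) * pdlStarUn N P β E α ν m * thetaStarUn β E m / (1 + β m * P)) := by
    have hterm : ∀ m, sinrUn N Pmu β (U + G) (fun m => E m / ((U + G : ℕ) : ℝ))
        (pdlStarUn N P β E α ν) m
        = (N : ℝ) * pdlStarUn N P β E α ν m * thetaStarUn β E m / (1 + β m * P) := by
      intro m
      unfold sinrUn
      have h1 : thetaUn β (U + G) (fun m => E m / ((U + G : ℕ) : ℝ)) m
          = thetaStarUn β E m := by
        unfold thetaUn thetaStarUn
        rw [mul_div_cancel₀ _ hUG.ne']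
      rw [h1, hbudget]
      congr 2
      ring
    unfold objUn seUn
    rw [Finset.mul_sum]
    refine Finset.sum_congr rfl fun m _ => ?_
    rw [hterm m]
    ring
  -- upper bound on all feasible values
  have hub : ∀ v ∈ {v : ℝ | ∃ (τ : ℕ) (pup pdl : Fin U → ℝ),
      feasUn G T P Pmu E τ pup pdl ∧ v = objUn N T Pmu β α τ pup pdl},
      v ≤ (1 - ((U + G : ℕ) : ℝ) / (T : ℝ)) *
          ∑ m, α m * Real.logb 2 (1 +
            (N : ℝ) * pdlStarUn N P β E α ν m * thetaStarUn β E m / (1 + β m * P)) := by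
    rintro v ⟨τ, pup, pdl, ⟨hτ1, hτ2, hpup, hpdl, hsum⟩, rfl⟩
    have hτT : (τ : ℝ) ≤ T := by exact_mod_cast hτ2
    have hτUG : ((U + G : ℕ) : ℝ) ≤ τ := by exact_mod_cast hτ1
    have hfacτ : 0 ≤ 1 - (τ : ℝ) / T := by
      rw [sub_nonneg, div_le_one hT0]; exact hτT
    have hfacUG : 0 ≤ 1 - ((U + G : ℕ) : ℝ) / T := by
      rw [sub_nonneg, div_le_one hT0]; exact_mod_cast hT
    have hfacle : 1 - (τ : ℝ) / T ≤ 1 - ((U + G : ℕ) : ℝ) / T := by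
      have : ((U + G : ℕ) : ℝ) / T ≤ (τ : ℝ) / T := by gcongr
      linarith
    have hθτ0 : ∀ m, 0 ≤ thetaUn β τ pup m := by
      intro m
      unfold thetaUn
      have h1 : 0 ≤ (τ : ℝ) * pup m := mul_nonneg (Nat.cast_nonneg _) (hpup m).1
      apply div_nonneg
      · exact mul_nonneg h1 (sq_nonneg _)
      · nlinarith [hβ m]
    have hθτle : ∀ m, thetaUn β τ pup m ≤ thetaStarUn β E m := by
      intro m
      have h1 : 0 ≤ (τ : ℝ) * pup m := mul_nonneg (Nat.cast_nonneg _) (hpup m).1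
      exact theta_mono_aux (β m) (hβ m) h1 (hpup m).2
    obtain ⟨S, hS_def⟩ : ∃ S : ℝ, S = ∑ u, pdl u := ⟨_, rfl⟩
    have hS0 : 0 ≤ S := hS_def ▸ Finset.sum_nonneg fun u _ => hpdl u
    rw [← hS_def] at hsum
    have hD : ∀ m : Fin U, 0 < 1 + β m * (Pmu + S) := by
      intro m
      have := hβ m
      nlinarith
    have hsinr0 : ∀ m, 0 ≤ sinrUn N Pmu β τ pup pdl m := by
      intro m
      unfold sinrUn
      exact div_nonneg (mul_nonneg (mul_nonneg hN0.le (hpdl m)) (hθτ0 m))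
        (by rw [← hS_def]; exact (hD m).le)
    have hRHS0 : 0 ≤ ∑ m, α m * Real.logb 2 (1 +
        (N : ℝ) * pdlStarUn N P β E α ν m * thetaStarUn β E m / (1 + β m * P)) := by
      apply Finset.sum_nonneg
      intro m _
      apply mul_nonneg (hα m).le
      apply Real.logb_nonneg one_lt_two
      have : 0 ≤ (N : ℝ) * pdlStarUn N P β E α ν m * thetaStarUn β E m / (1 + β m * P) :=
        div_nonneg (mul_nonneg (mul_nonneg hN0.le (hpdlstar0 m)) (hθ m).le) (hden m).le
      linarith
    rcases hS0.eq_or_lt with hS | hS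
    · -- zero power: objective is zero
      have hzero : ∀ m, pdl m = 0 := by
        intro m
        have hsz : ∑ u, pdl u = 0 := by rw [← hS_def]; exact hS.symm
        have := (Finset.sum_eq_zero_iff_of_nonneg (fun u _ => hpdl u)).mp hsz
        exact this m (Finset.mem_univ m)
      have : objUn N T Pmu β α τ pup pdl = 0 := by
        unfold objUn seUn sinrUn
        apply Finset.sum_eq_zero
        intro m _
        rw [hzero m]
        simp
      rw [this]
      exact mul_nonneg hfacUG hRHS0
    · -- positive power: rescale to full power and compare with water-filling
      obtain ⟨t, ht_def⟩ : ∃ t : ℝ, t = (P - Pmu) / S := ⟨_, rfl⟩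
      have htS : t * S = P - Pmu := by rw [ht_def]; exact div_mul_cancel₀ _ hS.ne'
      have ht1 : 1 ≤ t := by
        rw [ht_def, le_div_iff₀ hS]
        linarith
      obtain ⟨p', hp'_def⟩ : ∃ p' : Fin U → ℝ, p' = fun m => t * pdl m := ⟨_, rfl⟩
      have hp'0 : ∀ m, 0 ≤ p' m := fun m => by
        rw [hp'_def]; exact mul_nonneg (by linarith) (hpdl m)
      have hp'sum : ∑ m, p' m = P - Pmu := by
        rw [hp'_def]
        simp only
        rw [← Finset.mul_sum, ← hS_def, htS]
      have hstep : ∀ m, sinrUn N Pmu β τ pup pdl m ≤ c m * p' m := by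
        intro m
        have hA : sinrUn N Pmu β τ pup pdl m
            ≤ (N : ℝ) * pdl m * thetaStarUn β E m / (1 + β m * (Pmu + S)) := by
          unfold sinrUn
          rw [← hS_def]
          have hnum := mul_le_mul_of_nonneg_left (hθτle m) (mul_nonneg hN0.le (hpdl m))
          exact (div_le_div_iff_of_pos_right (hD m)).mpr
            (by calc (N : ℝ) * pdl m * thetaUn β τ pup m
                  = (N : ℝ) * pdl m * thetaUn β τ pup m := rfl
                _ ≤ (N : ℝ) * pdl m * thetaStarUn β E m := by nlinarith [hnum])

        refine hA.trans ?_
        have hkey : 1 + β m * P ≤ t * (1 + β m * (Pmu + S)) := by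
          have h6 : 0 ≤ (t - 1) * (1 + β m * Pmu) := by
            apply mul_nonneg (by linarith)
            nlinarith [hβ m]
          have hexp : t * (1 + β m * (Pmu + S)) = t + t * (β m * Pmu) + β m * (t * S) := by
            ring
          rw [hexp, htS, mul_sub]
          nlinarith [h6]
        have h7 : 0 ≤ (N : ℝ) * pdl m * thetaStarUn β E m :=
          mul_nonneg (mul_nonneg hN0.le (hpdl m)) (hθ m).le
        have h9 := mul_le_mul_of_nonneg_left hkey h7
        rw [hp'_def]
        simp only
        rw [hcmul m]
        rw [div_le_div_iff₀ (hD m) (hden m)]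
        nlinarith [h9]
      -- compare the objective with the rescaled-power objective
      have hobj1 : objUn N T Pmu β α τ pup pdl
          ≤ (1 - ((U + G : ℕ) : ℝ) / T) * ∑ m, α m * Real.logb 2 (1 + c m * p' m) := by
        unfold objUn seUn
        rw [Finset.mul_sum]
        apply Finset.sum_le_sum
        intro m _
        have hlog0 : 0 ≤ Real.logb 2 (1 + sinrUn N Pmu β τ pup pdl m) :=
          Real.logb_nonneg one_lt_two (by linarith [hsinr0 m])
        have hlog1 : Real.logb 2 (1 + sinrUn N Pmu β τ pup pdl m)
            ≤ Real.logb 2 (1 + c m * p' m) :=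
          Real.logb_le_logb_of_le one_lt_two (by linarith [hsinr0 m])
            (by linarith [hstep m])
        have := mul_le_mul hfacle hlog1 hlog0 hfacUG
        have h8 := mul_le_mul_of_nonneg_left this (hα m).le
        linarith [h8]
      -- water-filling comparison
      have hobj2 : ∑ m, α m * Real.logb 2 (1 + c m * p' m)
          ≤ ∑ m, α m * Real.logb 2 (1 +
            (N : ℝ) * pdlStarUn N P β E α ν m * thetaStarUn β E m / (1 + β m * P)) := by
        have hwf : ∀ m, α m * Real.logb 2 (1 + c m * p' m)
            ≤ α m * Real.logb 2 (1 + c m * pdlStarUn N P β E α ν m)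
              + ν * (p' m - pdlStarUn N P β E α ν m) :=
          fun m => waterfill_aux (α m) (c m) ν (p' m) (pdlStarUn N P β E α ν m)
            (hα m) (hc m) hν (hp'0 m) (hcstar m)
        calc ∑ m, α m * Real.logb 2 (1 + c m * p' m)
            ≤ ∑ m, (α m * Real.logb 2 (1 + c m * pdlStarUn N P β E α ν m)
              + ν * (p' m - pdlStarUn N P β E α ν m)) :=
              Finset.sum_le_sum fun m _ => hwf m
          _ = ∑ m, α m * Real.logb 2 (1 + c m * pdlStarUn N P β E α ν m)
              + ν * ((∑ m, p' m) - ∑ m, pdlStarUn N P β E α ν m) := by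
              rw [Finset.sum_add_distrib, ← Finset.mul_sum, Finset.sum_sub_distrib]
          _ = ∑ m, α m * Real.logb 2 (1 + c m * pdlStarUn N P β E α ν m) := by
              rw [hp'sum, hbudget]
              simp
          _ = ∑ m, α m * Real.logb 2 (1 +
              (N : ℝ) * pdlStarUn N P β E α ν m * thetaStarUn β E m / (1 + β m * P)) := by
              refine Finset.sum_congr rfl fun m _ => ?_
              rw [hcmul m]
        done
      calc objUn N T Pmu β α τ pup pdl
          ≤ (1 - ((U + G : ℕ) : ℝ) / T) * ∑ m, α m * Real.logb 2 (1 + c m * p' m) := hobj1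
        _ ≤ (1 - ((U + G : ℕ) : ℝ) / T) * ∑ m, α m * Real.logb 2 (1 +
              (N : ℝ) * pdlStarUn N P β E α ν m * thetaStarUn β E m / (1 + β m * P)) :=
            mul_le_mul_of_nonneg_left hobj2 hfacUG
  refine ⟨IsGreatest.csSup_eq ⟨⟨U + G, _, _, hfeas, hattain.symm⟩, hub⟩, hattain⟩

end
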